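/- As (x, y) → (0, 0) in ℝ², the difference [4 − 2(x − y)² + x²y²]/√((1 + x⁴/4)(1 + y⁴/4)) − (4 − 2(x − y)²) is O(‖(x, y)‖⁴); that is, the dot product of layer-normalized quadratic embeddings LN(E_quad(x)) · LN(E_quad(y)) equals the Gaussian-filter quadratic −2(x − y)² + 4 up to fourth-order error in the coordinates. -/

import Mathlib

open Asymptotics Filter

set_option maxHeartbeats 1600000 in
/-- As `(x, y) → (0, 0)` in `ℝ²`, the difference
`[4 − 2(x − y)² + x²y²]/√((1 + x⁴/4)(1 + y⁴/4)) − (4 − 2(x − y)²)` is `O(‖(x, y)‖⁴)`: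
the dot product of layer-normalized quadratic embeddings equals the
Gaussian-filter quadratic `−2(x − y)² + 4` up to fourth-order error. -/
theorem equad_dot_isBigO_fourth_order :
    (fun p : ℝ × ℝ =>
        (4 - 2 * (p.1 - p.2) ^ 2 + p.1 ^ 2 * p.2 ^ 2) /
            Real.sqrt ((1 + p.1 ^ 4 / 4) * (1 + p.2 ^ 4 / 4)) -
          (4 - 2 * (p.1 - p.2) ^ 2)) =O[nhds (0 : ℝ × ℝ)]
      (fun p : ℝ × ℝ => ‖p‖ ^ 4) := by
  rw [Asymptotics.isBigO_iff]
  refine ⟨20, ?_⟩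
  filter_upwards [Metric.ball_mem_nhds (0 : ℝ × ℝ) one_pos] with p hp
  obtain ⟨x, y⟩ := p
  simp only [Metric.mem_ball, dist_zero_right] at hp
  set n : ℝ := ‖((x, y) : ℝ × ℝ)‖ with hn
  have hn0 : (0 : ℝ) ≤ n := norm_nonneg _
  have hn1 : n < 1 := hp
  have hx : |x| ≤ n := by rw [← Real.norm_eq_abs]; exact norm_fst_le ((x, y) : ℝ × ℝ)
  have hy : |y| ≤ n := by rw [← Real.norm_eq_abs]; exact norm_snd_le ((x, y) : ℝ × ℝ)
  have hx2 : x ^ 2 ≤ n ^ 2 := by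
    calc x ^ 2 = |x| ^ 2 := (sq_abs x).symm
    _ ≤ n ^ 2 := pow_le_pow_left₀ (abs_nonneg x) hx 2
  have hy2 : y ^ 2 ≤ n ^ 2 := by
    calc y ^ 2 = |y| ^ 2 := (sq_abs y).symm
    _ ≤ n ^ 2 := pow_le_pow_left₀ (abs_nonneg y) hy 2
  have hx2n : (0:ℝ) ≤ x ^ 2 := sq_nonneg x
  have hy2n : (0:ℝ) ≤ y ^ 2 := sq_nonneg y
  have hx4n : (0:ℝ) ≤ x ^ 4 := by positivity
  have hy4n : (0:ℝ) ≤ y ^ 4 := by positivity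
  have hn4n : (0:ℝ) ≤ n ^ 4 := by positivity
  have hx4 : x ^ 4 ≤ n ^ 4 := by nlinarith
  have hy4 : y ^ 4 ≤ n ^ 4 := by nlinarith
  have hxy : x ^ 2 * y ^ 2 ≤ n ^ 4 := by nlinarith
  have harg : (1 : ℝ) ≤ (1 + x ^ 4 / 4) * (1 + y ^ 4 / 4) := by nlinarith
  set s : ℝ := Real.sqrt ((1 + x ^ 4 / 4) * (1 + y ^ 4 / 4)) with hs
  have hs1 : (1 : ℝ) ≤ s := by
    rw [hs]
    nlinarith [Real.sq_sqrt (le_trans zero_le_one harg),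
      Real.sqrt_nonneg ((1 + x ^ 4 / 4) * (1 + y ^ 4 / 4))]
  have hs0 : (0 : ℝ) < s := lt_of_lt_of_le one_pos hs1
  have hs2 : s ^ 2 = (1 + x ^ 4 / 4) * (1 + y ^ 4 / 4) :=
    Real.sq_sqrt (by linarith)
  have hn41 : n ^ 4 ≤ 1 := pow_le_one₀ hn0 hn1.le
  have h8 : x ^ 4 * y ^ 4 ≤ n ^ 4 := by
    calc x ^ 4 * y ^ 4 ≤ n ^ 4 * n ^ 4 := mul_le_mul hx4 hy4 hy4n hn4n
    _ ≤ 1 * n ^ 4 := by nlinarith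
    _ = n ^ 4 := one_mul _
  have hss : s ≤ s ^ 2 := by nlinarith
  have hsub : s - 1 ≤ (9 / 16) * n ^ 4 := by nlinarith
  clear_value n s
  clear hn hs hp harg hss
  have heq : (4 - 2 * (x - y) ^ 2 + x ^ 2 * y ^ 2) / s - (4 - 2 * (x - y) ^ 2)
      = ((4 - 2 * (x - y) ^ 2 + x ^ 2 * y ^ 2) - (4 - 2 * (x - y) ^ 2) * s) / s := by
    rw [sub_div, mul_div_assoc, div_self hs0.ne', mul_one]
  rw [heq]
  have hn2 : n ^ 2 ≤ 1 := by nlinarith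
  have hd : (x - y) ^ 2 + (x + y) ^ 2 = 2 * x ^ 2 + 2 * y ^ 2 := by ring
  have hA : |4 - 2 * (x - y) ^ 2| ≤ 4 := by
    rw [abs_le]
    constructor
    · linarith [sq_nonneg (x + y)]
    · linarith [sq_nonneg (x - y)]
  have key : |(4 - 2 * (x - y) ^ 2 + x ^ 2 * y ^ 2) - (4 - 2 * (x - y) ^ 2) * s|
      ≤ 4 * (s - 1) + n ^ 4 := by
    have hrw : (4 - 2 * (x - y) ^ 2 + x ^ 2 * y ^ 2) - (4 - 2 * (x - y) ^ 2) * s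
        = x ^ 2 * y ^ 2 - (4 - 2 * (x - y) ^ 2) * (s - 1) := by ring
    rw [hrw]
    calc |x ^ 2 * y ^ 2 - (4 - 2 * (x - y) ^ 2) * (s - 1)|
        ≤ |x ^ 2 * y ^ 2| + |(4 - 2 * (x - y) ^ 2) * (s - 1)| := abs_sub _ _
      _ = x ^ 2 * y ^ 2 + |4 - 2 * (x - y) ^ 2| * (s - 1) := by
          rw [abs_mul, abs_mul, abs_of_nonneg hx2n, abs_of_nonneg hy2n,
            abs_of_nonneg (by linarith : (0:ℝ) ≤ s - 1)]
      _ ≤ n ^ 4 + 4 * (s - 1) := by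
          have := mul_le_mul_of_nonneg_right hA (by linarith : (0:ℝ) ≤ s - 1)
          linarith
      _ = 4 * (s - 1) + n ^ 4 := by ring
  rw [Real.norm_eq_abs, Real.norm_eq_abs, abs_div, abs_of_pos hs0,
    div_le_iff₀ hs0, abs_of_nonneg hn4n]
  have h20 : 20 * n ^ 4 ≤ 20 * n ^ 4 * s := le_mul_of_one_le_right (by positivity) hs1
  linarith
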